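/- Under the assumptions of the parareal convergence theorem (F exact solver and G coarse solver both η-Lipschitz with η ∈ (0,1), ‖F(z)−G(z)‖ ≤ α, and ‖(F−G)(y)−(F−G)(z)‖ ≤ β‖y−z‖), the parareal error satisfies ‖U_n^k − u_n‖ ≤ B_n^k where B_n^k = 0 for n ≤ k and B_n^k = α β^k Σ_{i=0}^{n−k−1} C(k+i,k) η^i for n > k. -/

import Mathlib

theorem parareal_convergence_decaying
    (m : ℕ)
    (F G : EuclideanSpace ℝ (Fin m) → EuclideanSpace ℝ (Fin m))
    (α β η : ℝ) (hα : 0 < α) (hβ : 0 < β) (hη : η ∈ Set.Ioo (0 : ℝ) 1)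
    (hF : ∀ y z, ‖F y - F z‖ ≤ η * ‖y - z‖)
    (hG : ∀ y z, ‖G y - G z‖ ≤ η * ‖y - z‖)
    (hτ : ∀ z, ‖F z - G z‖ ≤ α)
    (hτLip : ∀ y z, ‖(F y - G y) - (F z - G z)‖ ≤ β * ‖y - z‖)
    (u₀ : EuclideanSpace ℝ (Fin m))
    (U : ℕ → ℕ → EuclideanSpace ℝ (Fin m))
    (u : ℕ → EuclideanSpace ℝ (Fin m))
    (hu0 : u 0 = u₀)
    (hu : ∀ n, 1 ≤ n → u n = F (u (n - 1)))
    (hU0k : ∀ k, U 0 k = u₀)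
    (hUn0 : ∀ n, 1 ≤ n → U n 0 = G (U (n - 1) 0))
    (hUnk : ∀ n k, 1 ≤ n →
      U n (k + 1) = F (U (n - 1) k) + G (U (n - 1) (k + 1)) - G (U (n - 1) k)) :
    ∀ n k : ℕ,
      ‖U n k - u n‖ ≤
        if n ≤ k then 0
        else α * β ^ k * ∑ i ∈ Finset.range (n - k), ((k + i).choose k : ℝ) * η ^ i := by
  have hη0 : 0 < η := hη.1
  -- parareal is exact for n ≤ k
  have hexact : ∀ n k, n ≤ k → U n k = u n := by
    intro n
    induction n with
    | zero => intro k _; rw [hU0k, hu0]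
    | succ n ih =>
      intro k hk
      obtain ⟨k', rfl⟩ : ∃ k', k = k' + 1 := ⟨k - 1, by omega⟩
      rw [hUnk (n+1) k' (by omega)]
      simp only [Nat.add_sub_cancel]
      rw [ih k' (by omega), ih (k'+1) (by omega), hu (n+1) (by omega)]
      simp only [Nat.add_sub_cancel]
      abel
  -- the Pascal sum identity
  have hS : ∀ k M, (∑ i ∈ Finset.range (M+1), (((k+1+i).choose (k+1) : ℝ)) * η^i)
      = (∑ i ∈ Finset.range (M+1), (((k+i).choose k : ℝ)) * η^i)
        + η * ∑ i ∈ Finset.range M, (((k+1+i).choose (k+1) : ℝ)) * η^i := by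
    intro k M
    induction M with
    | zero => simp
    | succ M ih =>
      have hP : (k+1+(M+1)).choose (k+1) = (k+(M+1)).choose k + (k+1+M).choose (k+1) := by
        have h := Nat.choose_succ_succ (k+1+M) k
        have e1 : k+1+(M+1) = (k+1+M)+1 := by omega
        have e2 : k+(M+1) = k+1+M := by omega
        rw [e1, e2, h]
      have hP' : (((k+1+(M+1)).choose (k+1) : ℝ)) = ((k+(M+1)).choose k : ℝ) + ((k+1+M).choose (k+1) : ℝ) := by
        exact_mod_cast congrArg (Nat.cast : ℕ → ℝ) hP
      have hL : (∑ i ∈ Finset.range (M+1), (((k+1+i).choose (k+1) : ℝ)) * η^i)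
          = (∑ i ∈ Finset.range M, (((k+1+i).choose (k+1) : ℝ)) * η^i)
            + ((k+1+M).choose (k+1) : ℝ) * η^M := Finset.sum_range_succ _ M
      rw [Finset.sum_range_succ, Finset.sum_range_succ (fun i => ((k+i).choose k : ℝ) * η^i)]
      linear_combination ih - η * hL + η^(M+1) * hP'
  -- the recursion for the bound
  have hrec : ∀ n k, k < n →
      β * (α * β^k * ∑ i ∈ Finset.range (n-k), (((k+i).choose k : ℝ)) * η^i)
        + η * (α * β^(k+1) * ∑ i ∈ Finset.range (n-(k+1)), (((k+1+i).choose (k+1) : ℝ)) * η^i)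
      ≤ α * β^(k+1) * ∑ i ∈ Finset.range ((n+1)-(k+1)), (((k+1+i).choose (k+1) : ℝ)) * η^i := by
    intro n k hk
    apply le_of_eq
    have e1 : (n+1)-(k+1) = (n-(k+1))+1 := by omega
    have e2 : n-k = (n-(k+1))+1 := by omega
    rw [e1, e2, hS k (n-(k+1))]
    ring
  have main : ∀ n k, ‖U n k - u n‖ ≤
      α * β^k * ∑ i ∈ Finset.range (n-k), (((k+i).choose k : ℝ)) * η^i := by
    intro n
    induction n with
    | zero =>
      intro k
      rw [hU0k, hu0]
      simp
    | succ n ih =>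
      intro k
      by_cases hnk : n+1 ≤ k
      · rw [hexact _ _ hnk]
        simp [Nat.sub_eq_zero_of_le hnk]
      · match k with
        | 0 =>
          have step : ‖U (n+1) 0 - u (n+1)‖ ≤ η * ‖U n 0 - u n‖ + α := by
            rw [hUn0 (n+1) (by omega), hu (n+1) (by omega)]
            simp only [Nat.add_sub_cancel]
            have e : G (U n 0) - F (u n) = (G (U n 0) - G (u n)) + (G (u n) - F (u n)) := by abel
            rw [e]
            refine le_trans (norm_add_le _ _) (add_le_add (hG _ _) ?_)
            rw [norm_sub_rev]
            exact hτ _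
          refine le_trans step ?_
          have h2 := mul_le_mul_of_nonneg_left (ih 0) hη0.le
          refine le_trans (add_le_add_left h2 α) (le_of_eq ?_)
          simp only [Nat.sub_zero, Nat.zero_add, Nat.choose_zero_right, Nat.cast_one, one_mul,
            pow_zero, mul_one]
          rw [Finset.sum_range_succ']
          simp only [pow_succ, pow_zero, ← Finset.sum_mul]
          ring
        | k+1 =>
          have step : ‖U (n+1) (k+1) - u (n+1)‖ ≤
              β * ‖U n k - u n‖ + η * ‖U n (k+1) - u n‖ := by
            rw [hUnk (n+1) k (by omega), hu (n+1) (by omega)]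
            simp only [Nat.add_sub_cancel]
            have e : F (U n k) + G (U n (k+1)) - G (U n k) - F (u n)
                = ((F (U n k) - G (U n k)) - (F (u n) - G (u n))) + (G (U n (k+1)) - G (u n)) := by
              abel
            rw [e]
            exact le_trans (norm_add_le _ _) (add_le_add (hτLip _ _) (hG _ _))
          refine le_trans step ?_
          refine le_trans (add_le_add (mul_le_mul_of_nonneg_left (ih k) hβ.le)
            (mul_le_mul_of_nonneg_left (ih (k+1)) hη0.le)) ?_
          exact hrec n k (by omega)
  intro n k
  by_cases hnk : n ≤ k
  · rw [if_pos hnk, hexact _ _ hnk]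
    simp
  · rw [if_neg hnk]
    exact main n k
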